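/- If H is a subgraph of the finite simple graph G (same vertex set), then for every positive integer k, det(I + k·L_H) ≤ det(I + k·L_G), where L_H and L_G are the respective Laplacians. -/

import Mathlib

open Matrix SimpleGraph Finset

private lemma psd_smul_real {n : ℕ} {M : Matrix (Fin n) (Fin n) ℝ} {c : ℝ}
    (hc : 0 ≤ c) (hM : M.PosSemidef) : (c • M).PosSemidef := by
  refine posSemidef_iff_dotProduct_mulVec.mpr ⟨?_, ?_⟩
  · unfold Matrix.IsHermitian
    rw [conjTranspose_smul, hM.1.eq, star_trivial]
  · intro x
    rw [smul_mulVec, dotProduct_smul, smul_eq_mul]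
    have h := hM.dotProduct_mulVec_nonneg x
    positivity

private lemma one_le_det_one_add_psd {n : ℕ} {C : Matrix (Fin n) (Fin n) ℝ}
    (hC : C.PosSemidef) : 1 ≤ (1 + C).det := by
  have hH := hC.1
  set U := (hH.eigenvectorUnitary : Matrix (Fin n) (Fin n) ℝ) with hUdef
  set D : Matrix (Fin n) (Fin n) ℝ := diagonal (RCLike.ofReal ∘ hH.eigenvalues) with hDdef
  have hU : U * star U = 1 := mem_unitaryGroup_iff.mp hH.eigenvectorUnitary.2
  have h1 : (1 : Matrix (Fin n) (Fin n) ℝ) + C = U * (1 + D) * star U := by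
    rw [mul_add, add_mul, mul_one, hU]
    congr 1
    exact hH.spectral_theorem
  have hdetU : U.det * (star U).det = 1 := by
    rw [← det_mul, hU, det_one]
  have hD : (1 : Matrix (Fin n) (Fin n) ℝ) + D = diagonal (fun i => 1 + hH.eigenvalues i) := by
    rw [hDdef, ← diagonal_one, diagonal_add]
    rfl
  have hprod : (1:ℝ) ≤ (1 + D).det := by
    rw [hD, det_diagonal]
    calc (1:ℝ) = ∏ _i : Fin n, (1:ℝ) := by simp
      _ ≤ ∏ i, (1 + hH.eigenvalues i) := by
          refine Finset.prod_le_prod (fun i _ => zero_le_one) (fun i _ => ?_)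
          have := hC.eigenvalues_nonneg i
          linarith
  have hfin : (1 + C).det = (1 + D).det := by
    rw [h1, det_mul, det_mul]
    calc U.det * (1 + D).det * (star U).det
        = (1 + D).det * (U.det * (star U).det) := by ring
      _ = (1 + D).det := by rw [hdetU, mul_one]
  linarith

open scoped MatrixOrder in
private lemma det_le_det_add_psd {n : ℕ} {P B : Matrix (Fin n) (Fin n) ℝ}
    (hP : P.PosDef) (hB : B.PosSemidef) : P.det ≤ (P + B).det := by
  set S := CFC.sqrt P with hSdef
  have hSS : S * S = P := CFC.sqrt_mul_sqrt_self P hP.posSemidef.nonneg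
  have hdetP : S.det * S.det = P.det := by rw [← det_mul, hSS]
  have hPdet : 0 < P.det := hP.det_pos
  have hSdet : IsUnit S.det := by
    refine isUnit_iff_ne_zero.mpr fun h => ?_
    rw [h, mul_zero] at hdetP
    exact hPdet.ne hdetP
  have hSherm : S.IsHermitian := (CFC.sqrt_nonneg P).posSemidef.1
  have hC : PosSemidef (S⁻¹ * B * S⁻¹) := by
    have := hB.conjTranspose_mul_mul_same (B := S⁻¹)
    rwa [hSherm.inv.eq] at this
  have hSB : S * (S⁻¹ * B * S⁻¹) * S = B := by
    simp only [← Matrix.mul_assoc]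
    rw [Matrix.mul_nonsing_inv _ hSdet, one_mul, Matrix.mul_assoc,
      Matrix.nonsing_inv_mul _ hSdet, mul_one]
  have key : P + B = S * (1 + S⁻¹ * B * S⁻¹) * S := by
    rw [mul_add, add_mul, mul_one, hSS, hSB]
  rw [key, det_mul, det_mul, mul_right_comm, hdetP]
  nlinarith [one_le_det_one_add_psd hC, hPdet]

private lemma det_one_add_le {n : ℕ} {A B : Matrix (Fin n) (Fin n) ℝ}
    (hA : A.PosSemidef) (hB : B.PosSemidef) : (1 + A).det ≤ (1 + A + B).det :=
  det_le_det_add_psd (Matrix.PosDef.add_posSemidef Matrix.PosDef.one hA) hB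

theorem det_one_add_smul_lapMatrix_monotone
    {n : ℕ} (G H : SimpleGraph (Fin n)) [DecidableRel G.Adj] [DecidableRel H.Adj]
    (hHG : H ≤ G) (k : ℕ) (hk : 0 < k) :
    (1 + (k : ℤ) • H.lapMatrix ℤ).det ≤ (1 + (k : ℤ) • G.lapMatrix ℤ).det := by
  -- transfer to ℝ
  rw [← @Int.cast_le ℝ]
  have hmapH : ((1 + (k : ℤ) • H.lapMatrix ℤ).map (Int.castRingHom ℝ))
      = 1 + (k : ℝ) • H.lapMatrix ℝ := by
    ext i j
    simp only [Matrix.map_apply, Matrix.add_apply, Matrix.smul_apply, Matrix.one_apply,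
      lapMatrix, degMatrix, adjMatrix, Matrix.sub_apply, Matrix.diagonal_apply, Matrix.of_apply,
      smul_eq_mul, Int.coe_castRingHom]
    push_cast
    split_ifs <;> ring
  have hmapG : ((1 + (k : ℤ) • G.lapMatrix ℤ).map (Int.castRingHom ℝ))
      = 1 + (k : ℝ) • G.lapMatrix ℝ := by
    ext i j
    simp only [Matrix.map_apply, Matrix.add_apply, Matrix.smul_apply, Matrix.one_apply,
      lapMatrix, degMatrix, adjMatrix, Matrix.sub_apply, Matrix.diagonal_apply, Matrix.of_apply,
      smul_eq_mul, Int.coe_castRingHom]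
    push_cast
    split_ifs <;> ring
  have c1 : (((1 + (k : ℤ) • H.lapMatrix ℤ).det : ℤ) : ℝ)
      = (1 + (k : ℝ) • H.lapMatrix ℝ).det := by
    rw [← eq_intCast (Int.castRingHom ℝ), RingHom.map_det, RingHom.mapMatrix_apply, hmapH]
  have c2 : (((1 + (k : ℤ) • G.lapMatrix ℤ).det : ℤ) : ℝ)
      = (1 + (k : ℝ) • G.lapMatrix ℝ).det := by
    rw [← eq_intCast (Int.castRingHom ℝ), RingHom.map_det, RingHom.mapMatrix_apply, hmapG]
  rw [c1, c2]
  have hkpos : (0:ℝ) ≤ (k:ℝ) := by positivity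
  have hLH := posSemidef_lapMatrix ℝ H
  have hLG := posSemidef_lapMatrix ℝ G
  have hdiff : (G.lapMatrix ℝ - H.lapMatrix ℝ).PosSemidef := by
    refine posSemidef_iff_dotProduct_mulVec.mpr ⟨?_, ?_⟩
    · unfold Matrix.IsHermitian
      rw [conjTranspose_sub, hLG.1.eq, hLH.1.eq]
    · intro x
      rw [star_trivial, sub_mulVec, dotProduct_sub, sub_nonneg,
        ← toLinearMap₂'_apply', ← toLinearMap₂'_apply',
        lapMatrix_toLinearMap₂', lapMatrix_toLinearMap₂']
      gcongr with i _ j _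
      split_ifs with h1 h2
      · exact le_refl _
      · exact absurd (hHG h1) h2
      · positivity
      · exact le_refl _
  have heq : 1 + (k : ℝ) • G.lapMatrix ℝ
      = 1 + (k : ℝ) • H.lapMatrix ℝ + (k : ℝ) • (G.lapMatrix ℝ - H.lapMatrix ℝ) := by
    rw [smul_sub]; abel
  rw [heq]
  exact det_one_add_le (psd_smul_real hkpos hLH) (psd_smul_real hkpos hdiff)
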